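/- Let f, g_1, …, g_m be real-analytic vector fields on ℝ^n, let T : ℝ^n → ℝ^{n*} be a real-analytic map with DT(x) injective for every x (an immersion), and let f̂, ĝ_1, …, ĝ_m be polynomial vector fields on ℝ^{n*} such that f̂(T(x)) = DT(x)·f(x) and ĝ_i(T(x)) = DT(x)·g_i(x) for all x ∈ ℝ^n and all i. Then for every x ∈ ℝ^n and every k ≥ 0, dim Ĉ^k(T(x)) = dim C^k(x) and dim Ĉ(T(x)) = dim C(x); consequently x ∈ S_∞ if and only if dim Ĉ(T(x)) < n, and there exists a finite integer r* such that S_k = S_∞ for all k ≥ r* (the accessibility index of the analytic system is finite). -/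

import Mathlib

/-- The Lie bracket of `C^1` vector fields: `[X,Y](a) = DY(a)X(a) − DX(a)Y(a)`. -/
noncomputable def vBracket {E : Type*} [NormedAddCommGroup E] [NormedSpace ℝ E]
    (X Y : E → E) : E → E :=
  fun a => fderiv ℝ Y a (X a) - fderiv ℝ X a (Y a)

/-- The family `𝒞^k` of Lie brackets of depth at most `k`:
`𝒞^0 = {f, g_1, …, g_m}`, `𝒞^{k+1} = 𝒞^k ∪ {[X,h] : X ∈ {f, g_1, …, g_m}, h ∈ 𝒞^k}`. -/
def aFam {E : Type*} [NormedAddCommGroup E] [NormedSpace ℝ E] {m : ℕ}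
    (f : E → E) (g : Fin m → E → E) : ℕ → Set (E → E)
  | 0 => insert f (Set.range g)
  | k + 1 => aFam f g k ∪
      {h | ∃ X ∈ insert f (Set.range g), ∃ h' ∈ aFam f g k, h = vBracket X h'}

/-- `C^k(a) = span_ℝ {h(a) : h ∈ 𝒞^k}`. -/
noncomputable def aSpan {E : Type*} [NormedAddCommGroup E] [NormedSpace ℝ E] {m : ℕ}
    (f : E → E) (g : Fin m → E → E) (k : ℕ) (a : E) : Submodule ℝ E :=
  Submodule.span ℝ ((fun h => h a) '' aFam f g k)

/-- `C(a) = span_ℝ {h(a) : h ∈ 𝒞}`, `𝒞 = ⋃ k, 𝒞^k`. -/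
noncomputable def aSpanInf {E : Type*} [NormedAddCommGroup E] [NormedSpace ℝ E] {m : ℕ}
    (f : E → E) (g : Fin m → E → E) (a : E) : Submodule ℝ E :=
  Submodule.span ℝ ((fun h => h a) '' ⋃ k, aFam f g k)

open MvPolynomial

/-- Evaluation of a polynomial vector field at a point of `ℝ^N`. -/
noncomputable def pvfEval {N : ℕ} (X : Fin N → MvPolynomial (Fin N) ℝ) (a : Fin N → ℝ) :
    Fin N → ℝ := fun i => eval a (X i)

/-- Lie bracket of polynomial vector fields (componentwise formula, which agrees with the
`fderiv` formula for polynomial vector fields). -/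
noncomputable def pBracket {N : ℕ} (X Y : Fin N → MvPolynomial (Fin N) ℝ) :
    Fin N → MvPolynomial (Fin N) ℝ :=
  fun j => ∑ i, (X i * pderiv i (Y j) - Y i * pderiv i (X j))

/-- The family `𝒞̂^k` of Lie brackets of depth at most `k` of the polynomial vector fields
`f̂, ĝ_1, …, ĝ_m`. -/
def pFam {N m : ℕ} (f : Fin N → MvPolynomial (Fin N) ℝ)
    (g : Fin m → Fin N → MvPolynomial (Fin N) ℝ) :
    ℕ → Set (Fin N → MvPolynomial (Fin N) ℝ)
  | 0 => insert f (Set.range g)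
  | k + 1 => pFam f g k ∪
      {h | ∃ X ∈ insert f (Set.range g), ∃ h' ∈ pFam f g k, h = pBracket X h'}

/-- `Ĉ^k(z) = span_ℝ {ĥ(z) : ĥ ∈ 𝒞̂^k}`. -/
noncomputable def pSpan {N m : ℕ} (f : Fin N → MvPolynomial (Fin N) ℝ)
    (g : Fin m → Fin N → MvPolynomial (Fin N) ℝ) (k : ℕ) (a : Fin N → ℝ) :
    Submodule ℝ (Fin N → ℝ) :=
  Submodule.span ℝ ((fun h => pvfEval h a) '' pFam f g k)

/-- `Ĉ(z) = span_ℝ {ĥ(z) : ĥ ∈ 𝒞̂}`. -/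
noncomputable def pSpanInf {N m : ℕ} (f : Fin N → MvPolynomial (Fin N) ℝ)
    (g : Fin m → Fin N → MvPolynomial (Fin N) ℝ) (a : Fin N → ℝ) :
    Submodule ℝ (Fin N → ℝ) :=
  Submodule.span ℝ ((fun h => pvfEval h a) '' ⋃ k, pFam f g k)


noncomputable def pderivL {N : ℕ} (P : MvPolynomial (Fin N) ℝ) (z : Fin N → ℝ) :
    (Fin N → ℝ) →L[ℝ] ℝ :=
  ∑ i, eval z (pderiv i P) • ContinuousLinearMap.proj (R := ℝ) (φ := fun _ : Fin N => ℝ) i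

lemma pderivL_apply {N : ℕ} (P : MvPolynomial (Fin N) ℝ) (z v : Fin N → ℝ) :
    pderivL P z v = ∑ i, eval z (pderiv i P) * v i := by
  simp [pderivL]

lemma hasFDerivAt_eval_mvp {N : ℕ} (P : MvPolynomial (Fin N) ℝ) (z : Fin N → ℝ) :
    HasFDerivAt (fun w => eval w P) (pderivL P z) z := by
  induction P using MvPolynomial.induction_on with
  | C a =>
      have : pderivL (C (σ := Fin N) a) z = 0 := by
        ext v; simp [pderivL_apply]
      have h0 : (fun w : Fin N → ℝ => eval w (C (σ := Fin N) a)) = fun _ => (a : ℝ) := by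
        funext w; simp
      rw [this, h0]
      exact hasFDerivAt_const _ _
  | add p q hp hq =>
      have : pderivL (p + q) z = pderivL p z + pderivL q z := by
        ext v; simp [pderivL_apply, add_mul, Finset.sum_add_distrib]
      rw [this]
      have h := hp.add hq
      have e : ((fun w => eval w p) + fun w => eval w q) = fun w : Fin N → ℝ => eval w (p + q) := by
        funext w; simp
      rw [e] at h
      exact h
  | mul_X p i hp =>
      have hXi : HasFDerivAt (fun w : Fin N → ℝ => w i)
          (ContinuousLinearMap.proj (R := ℝ) (φ := fun _ : Fin N => ℝ) i) z :=
        (ContinuousLinearMap.proj (R := ℝ) (φ := fun _ : Fin N => ℝ) i).hasFDerivAt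
      have h1 : HasFDerivAt (fun w => eval w (p * X i))
          (eval z p • ContinuousLinearMap.proj (R := ℝ) (φ := fun _ : Fin N => ℝ) i
            + (pderivL p z).smulRight (z i)) z := by
        have h := hp.mul' hXi
        have e : ((fun w => eval w p) * fun w : Fin N → ℝ => w i) = fun w => eval w (p * X i) := by
          funext w; simp
        have e2 : (pderivL p z).smulRight (z i) = MulOpposite.op (z i) • pderivL p z := by
          ext v; simp [mul_comm]
        rw [e] at h
        rw [e2]
        exact h
      have : pderivL (p * X i) z = eval z p • ContinuousLinearMap.proj (R := ℝ)
          (φ := fun _ : Fin N => ℝ) i + (pderivL p z).smulRight (z i) := by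
        ext v
        simp only [pderivL_apply, ContinuousLinearMap.add_apply,
          ContinuousLinearMap.smul_apply, ContinuousLinearMap.proj_apply,
          ContinuousLinearMap.smulRight_apply, smul_eq_mul, pderiv_mul, pderiv_X, eval_X,
          map_add, eval_mul, add_mul, Finset.sum_add_distrib, Finset.sum_mul]
        have e1 : ∑ j, eval z p * eval z ((Pi.single j 1 : Fin N → MvPolynomial (Fin N) ℝ) i) * v j
            = eval z p * v i := by
          rw [Finset.sum_eq_single i]
          · simp
          · intro b _ hb; simp [Pi.single_apply, hb]
          · simp
        rw [e1, add_comm]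
        congr 1
        exact Finset.sum_congr rfl fun j _ => by ring
      rw [this]
      exact h1

lemma hasFDerivAt_pvfEval {N : ℕ} (P : Fin N → MvPolynomial (Fin N) ℝ) (z : Fin N → ℝ) :
    HasFDerivAt (fun w => pvfEval P w)
      (ContinuousLinearMap.pi fun j => pderivL (P j) z) z :=
  hasFDerivAt_pi.2 fun j => hasFDerivAt_eval_mvp (P j) z

lemma fderiv_pvfEval_apply {N : ℕ} (P : Fin N → MvPolynomial (Fin N) ℝ) (z v : Fin N → ℝ)
    (j : Fin N) :
    fderiv ℝ (fun w => pvfEval P w) z v j = ∑ i, eval z (pderiv i (P j)) * v i := by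
  rw [(hasFDerivAt_pvfEval P z).fderiv]
  simp [pderivL_apply]

lemma contDiff_pvfEval {N : ℕ} (P : Fin N → MvPolynomial (Fin N) ℝ) :
    ContDiff ℝ ⊤ (fun w => pvfEval P w) :=
  contDiff_pi.2 fun j =>
    ((AnalyticOnNhd.eval_mvPolynomial (P j) (𝕜 := ℝ)).contDiff)

lemma pvfEval_pBracket {N : ℕ} (X Y : Fin N → MvPolynomial (Fin N) ℝ) (z : Fin N → ℝ) :
    pvfEval (pBracket X Y) z = vBracket (fun w => pvfEval X w) (fun w => pvfEval Y w) z := by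
  funext j
  have h1 := fderiv_pvfEval_apply Y z (pvfEval X z) j
  have h2 := fderiv_pvfEval_apply X z (pvfEval Y z) j
  simp only [vBracket, Pi.sub_apply, h1, h2, pvfEval, pBracket, map_sum, map_sub, eval_mul,
    ← Finset.sum_sub_distrib]
  exact Finset.sum_congr rfl fun i _ => by ring

lemma key_bracket {n N : ℕ} {T : (Fin n → ℝ) → (Fin N → ℝ)}
    (hT : ContDiff ℝ ⊤ T) {X h : (Fin n → ℝ) → (Fin n → ℝ)}
    {Xh hh : (Fin N → ℝ) → (Fin N → ℝ)}
    (hX : ContDiff ℝ ⊤ X) (hhc : ContDiff ℝ ⊤ h)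
    (hXh : Differentiable ℝ Xh) (hhh : Differentiable ℝ hh)
    (hrX : ∀ x, Xh (T x) = fderiv ℝ T x (X x))
    (hrh : ∀ x, hh (T x) = fderiv ℝ T x (h x)) (x : Fin n → ℝ) :
    vBracket Xh hh (T x) = fderiv ℝ T x (vBracket X h x) := by
  have hTd : Differentiable ℝ T := hT.differentiable (by simp)
  have hA : Differentiable ℝ (fun y => fderiv ℝ T y) :=
    (hT.fderiv_right (m := ⊤) le_top).differentiable (by simp)
  have main : ∀ (W : (Fin n → ℝ) → (Fin n → ℝ)) (Wh : (Fin N → ℝ) → (Fin N → ℝ)),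
      ContDiff ℝ ⊤ W → Differentiable ℝ Wh → (∀ y, Wh (T y) = fderiv ℝ T y (W y)) →
      ∀ v, fderiv ℝ Wh (T x) (fderiv ℝ T x v)
        = fderiv ℝ (fun y => fderiv ℝ T y) x v (W x) + fderiv ℝ T x (fderiv ℝ W x v) := by
    intro W Wh hW hWh hrel v
    have c1 : fderiv ℝ (fun y => Wh (T y)) x = (fderiv ℝ Wh (T x)).comp (fderiv ℝ T x) :=
      fderiv_comp x (hWh _) (hTd _)
    have c2 : (fun y => Wh (T y)) = fun y => fderiv ℝ T y (W y) := funext hrel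
    have c3 : fderiv ℝ (fun y => fderiv ℝ T y (W y)) x
        = (fderiv ℝ T x).comp (fderiv ℝ W x)
          + (fderiv ℝ (fun y => fderiv ℝ T y) x).flip (W x) :=
      fderiv_clm_apply (hA x) ((hW.differentiable (by simp)) x)
    rw [c2, c3] at c1
    have := congrArg (fun L => L v) c1
    simpa [ContinuousLinearMap.add_apply, ContinuousLinearMap.comp_apply,
      ContinuousLinearMap.flip_apply, add_comm] using this.symm
  have hsym : ∀ v w, fderiv ℝ (fun y => fderiv ℝ T y) x v w
      = fderiv ℝ (fun y => fderiv ℝ T y) x w v := by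
    intro v w
    exact (hT.contDiffAt.isSymmSndFDerivAt (by norm_num)).eq v w
  have e1 := main h hh hhc hhh hrh (X x)
  have e2 := main X Xh hX hXh hrX (h x)
  simp only [vBracket, hrX x, hrh x, e1, e2, hsym (X x) (h x)]
  rw [map_sub]
  abel

lemma contDiff_vBracket {E : Type*} [NormedAddCommGroup E] [NormedSpace ℝ E]
    {X Y : E → E} (hX : ContDiff ℝ ⊤ X) (hY : ContDiff ℝ ⊤ Y) :
    ContDiff ℝ ⊤ (vBracket X Y) :=
  ((hY.fderiv_right le_top).clm_apply hX).sub ((hX.fderiv_right le_top).clm_apply hY)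

lemma corr_aux {n N m : ℕ}
    (f : (Fin n → ℝ) → (Fin n → ℝ)) (g : Fin m → (Fin n → ℝ) → (Fin n → ℝ))
    (hf : ContDiff ℝ ⊤ f) (hg : ∀ i, ContDiff ℝ ⊤ (g i))
    (T : (Fin n → ℝ) → (Fin N → ℝ)) (hT : ContDiff ℝ ⊤ T)
    (fhat : Fin N → MvPolynomial (Fin N) ℝ)
    (ghat : Fin m → Fin N → MvPolynomial (Fin N) ℝ)
    (hfrel : ∀ x, pvfEval fhat (T x) = fderiv ℝ T x (f x))
    (hgrel : ∀ i x, pvfEval (ghat i) (T x) = fderiv ℝ T x (g i x)) (k : ℕ) :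
    (∀ h ∈ aFam f g k, ContDiff ℝ ⊤ h ∧
      ∃ hh ∈ pFam fhat ghat k, ∀ x, pvfEval hh (T x) = fderiv ℝ T x (h x)) ∧
    (∀ hh ∈ pFam fhat ghat k, ∃ h ∈ aFam f g k, ContDiff ℝ ⊤ h ∧
      ∀ x, pvfEval hh (T x) = fderiv ℝ T x (h x)) := by
  have base : ∀ X ∈ insert f (Set.range g), ContDiff ℝ ⊤ X ∧
      ∃ Xh ∈ insert fhat (Set.range ghat), ∀ x, pvfEval Xh (T x) = fderiv ℝ T x (X x) := by
    rintro X (rfl | ⟨i, rfl⟩)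
    · exact ⟨hf, fhat, Set.mem_insert _ _, hfrel⟩
    · exact ⟨hg i, ghat i, Set.mem_insert_of_mem _ ⟨i, rfl⟩, hgrel i⟩
  have pbase : ∀ Xh ∈ insert fhat (Set.range ghat), ∃ X ∈ insert f (Set.range g),
      ContDiff ℝ ⊤ X ∧ ∀ x, pvfEval Xh (T x) = fderiv ℝ T x (X x) := by
    rintro Xh (rfl | ⟨i, rfl⟩)
    · exact ⟨f, Set.mem_insert _ _, hf, hfrel⟩
    · exact ⟨g i, Set.mem_insert_of_mem _ ⟨i, rfl⟩, hg i, hgrel i⟩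
  induction k with
  | zero =>
      constructor
      · intro h hmem
        obtain ⟨hc, Xh, hXh, hrel⟩ := base h hmem
        exact ⟨hc, Xh, hXh, hrel⟩
      · intro hh hmem
        exact pbase hh hmem
  | succ k ih =>
      constructor
      · intro h hmem
        rcases hmem with hmem | ⟨Xv, hXmem, h', hh'mem, rfl⟩
        · obtain ⟨hc, hh, hhmem, hrel⟩ := ih.1 h hmem
          exact ⟨hc, hh, Set.mem_union_left _ hhmem, hrel⟩
        · obtain ⟨hXc, Xhat, hXhatmem, hXrel⟩ := base Xv hXmem
          obtain ⟨hh'c, hhat', hhat'mem, hrel'⟩ := ih.1 h' hh'mem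
          refine ⟨contDiff_vBracket hXc hh'c,
            pBracket Xhat hhat', Set.mem_union_right _ ⟨Xhat, hXhatmem, hhat', hhat'mem, rfl⟩,
            fun x => ?_⟩
          rw [pvfEval_pBracket]
          exact key_bracket hT hXc hh'c
            ((contDiff_pvfEval Xhat).differentiable (by simp))
            ((contDiff_pvfEval hhat').differentiable (by simp)) hXrel hrel' x
      · intro hh hmem
        rcases hmem with hmem | ⟨Xhat, hXhatmem, hhat', hhat'mem, rfl⟩
        · obtain ⟨h, hamem, hc, hrel⟩ := ih.2 hh hmem
          exact ⟨h, Set.mem_union_left _ hamem, hc, hrel⟩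
        · obtain ⟨Xv, hXmem, hXc, hXrel⟩ := pbase Xhat hXhatmem
          obtain ⟨h', hh'mem, hh'c, hrel'⟩ := ih.2 hhat' hhat'mem
          refine ⟨vBracket Xv h', Set.mem_union_right _ ⟨Xv, hXmem, h', hh'mem, rfl⟩,
            contDiff_vBracket hXc hh'c, fun x => ?_⟩
          rw [pvfEval_pBracket]
          exact key_bracket hT hXc hh'c
            ((contDiff_pvfEval Xhat).differentiable (by simp))
            ((contDiff_pvfEval hhat').differentiable (by simp)) hXrel hrel' x

lemma pvfEval_mem_span {N : ℕ} (S : Set (Fin N → MvPolynomial (Fin N) ℝ)) (z : Fin N → ℝ)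
    {h : Fin N → MvPolynomial (Fin N) ℝ}
    (hmem : h ∈ Submodule.span (MvPolynomial (Fin N) ℝ) S) :
    pvfEval h z ∈ Submodule.span ℝ ((fun p => pvfEval p z) '' S) := by
  induction hmem using Submodule.span_induction with
  | mem p hp => exact Submodule.subset_span ⟨p, hp, rfl⟩
  | zero =>
      have : pvfEval (0 : Fin N → MvPolynomial (Fin N) ℝ) z = 0 := funext fun i => by
        simp [pvfEval]
      rw [this]; exact zero_mem _
  | add a b _ _ ha hb =>
      have : pvfEval (a + b) z = pvfEval a z + pvfEval b z := funext fun i => by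
        simp [pvfEval]
      rw [this]; exact add_mem ha hb
  | smul c a _ ha =>
      have : pvfEval (c • a) z = eval z c • pvfEval a z := funext fun i => by
        simp [pvfEval, smul_eq_mul]
      rw [this]; exact Submodule.smul_mem _ _ ha

lemma pFam_mono {N m : ℕ} (fhat : Fin N → MvPolynomial (Fin N) ℝ)
    (ghat : Fin m → Fin N → MvPolynomial (Fin N) ℝ) :
    Monotone (pFam fhat ghat) :=
  monotone_nat_of_le_succ fun k => Set.subset_union_left

/-- If the analytic system `f, g_1, …, g_m` on `ℝ^n` is immersed by an
analytic immersion `T : ℝ^n → ℝ^{n*}` into a polynomial system `f̂, ĝ_1, …, ĝ_m`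
(`f̂(T x) = DT(x)·f(x)`, `ĝ_i(T x) = DT(x)·g_i(x)`), then for all `x` and `k`,
`dim Ĉ^k(T x) = dim C^k(x)` and `dim Ĉ(T x) = dim C(x)`; consequently `x ∈ S_∞` iff
`dim Ĉ(T x) < n`, and there is a finite `r*` with `S_k = S_∞` for all `k ≥ r*`. -/
theorem immersion_into_polynomial_system {n N m : ℕ}
    (f : (Fin n → ℝ) → (Fin n → ℝ)) (g : Fin m → (Fin n → ℝ) → (Fin n → ℝ))
    (hf : AnalyticOnNhd ℝ f Set.univ) (hg : ∀ i, AnalyticOnNhd ℝ (g i) Set.univ)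
    (T : (Fin n → ℝ) → (Fin N → ℝ)) (hT : AnalyticOnNhd ℝ T Set.univ)
    (hTimm : ∀ x, Function.Injective (fderiv ℝ T x))
    (fhat : Fin N → MvPolynomial (Fin N) ℝ)
    (ghat : Fin m → Fin N → MvPolynomial (Fin N) ℝ)
    (hfrel : ∀ x, pvfEval fhat (T x) = fderiv ℝ T x (f x))
    (hgrel : ∀ i x, pvfEval (ghat i) (T x) = fderiv ℝ T x (g i x)) :
    (∀ (x : Fin n → ℝ) (k : ℕ),
      Module.finrank ℝ (pSpan fhat ghat k (T x)) = Module.finrank ℝ (aSpan f g k x)) ∧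
    (∀ x : Fin n → ℝ,
      Module.finrank ℝ (pSpanInf fhat ghat (T x)) = Module.finrank ℝ (aSpanInf f g x)) ∧
    (∀ x : Fin n → ℝ,
      Module.finrank ℝ (aSpanInf f g x) < n ↔
        Module.finrank ℝ (pSpanInf fhat ghat (T x)) < n) ∧
    ∃ r : ℕ, ∀ k ≥ r,
      {x : Fin n → ℝ | Module.finrank ℝ (aSpan f g k x) < n} =
        {x : Fin n → ℝ | Module.finrank ℝ (aSpanInf f g x) < n} := by
  classical
  have hfc : ContDiff ℝ ⊤ f := hf.contDiff
  have hgc : ∀ i, ContDiff ℝ ⊤ (g i) := fun i => (hg i).contDiff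
  have hTc : ContDiff ℝ ⊤ T := hT.contDiff
  have corr := corr_aux f g hfc hgc T hTc fhat ghat hfrel hgrel
  -- image set equality at each point
  have himg : ∀ (x : Fin n → ℝ) (k : ℕ),
      (fun h => pvfEval h (T x)) '' pFam fhat ghat k
        = (fderiv ℝ T x) '' ((fun h => h x) '' aFam f g k) := by
    intro x k
    ext v
    constructor
    · rintro ⟨hh, hmem, rfl⟩
      obtain ⟨h, hamem, _, hrel⟩ := (corr k).2 hh hmem
      exact ⟨h x, ⟨h, hamem, rfl⟩, (hrel x).symm⟩
    · rintro ⟨_, ⟨h, hamem, rfl⟩, rfl⟩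
      obtain ⟨_, hh, hpmem, hrel⟩ := (corr k).1 h hamem
      exact ⟨hh, hpmem, hrel x⟩
  have hmapfinrank : ∀ (x : Fin n → ℝ) (p : Submodule ℝ (Fin n → ℝ)),
      Module.finrank ℝ (Submodule.map ((fderiv ℝ T x : (Fin n → ℝ) →L[ℝ] (Fin N → ℝ))
        : (Fin n → ℝ) →ₗ[ℝ] (Fin N → ℝ)) p) = Module.finrank ℝ p := fun x p =>
    (Submodule.equivMapOfInjective _ (hTimm x) p).finrank_eq.symm
  have part1 : ∀ (x : Fin n → ℝ) (k : ℕ),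
      Module.finrank ℝ (pSpan fhat ghat k (T x)) = Module.finrank ℝ (aSpan f g k x) := by
    intro x k
    have : pSpan fhat ghat k (T x) = Submodule.map
        ((fderiv ℝ T x : (Fin n → ℝ) →L[ℝ] (Fin N → ℝ)) : (Fin n → ℝ) →ₗ[ℝ] (Fin N → ℝ))
        (aSpan f g k x) := by
      rw [pSpan, himg x k, aSpan, ← Submodule.span_image]
      rfl
    rw [this, hmapfinrank]
  have part2 : ∀ x : Fin n → ℝ,
      Module.finrank ℝ (pSpanInf fhat ghat (T x)) = Module.finrank ℝ (aSpanInf f g x) := by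
    intro x
    have himgInf : (fun h => pvfEval h (T x)) '' (⋃ k, pFam fhat ghat k)
        = (fderiv ℝ T x) '' ((fun h => h x) '' ⋃ k, aFam f g k) := by
      simp only [Set.image_iUnion]
      exact Set.iUnion_congr fun k => himg x k
    have : pSpanInf fhat ghat (T x) = Submodule.map
        ((fderiv ℝ T x : (Fin n → ℝ) →L[ℝ] (Fin N → ℝ)) : (Fin n → ℝ) →ₗ[ℝ] (Fin N → ℝ))
        (aSpanInf f g x) := by
      rw [pSpanInf, himgInf, aSpanInf, ← Submodule.span_image]
      rfl
    rw [this, hmapfinrank]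
  refine ⟨part1, part2, fun x => by rw [part2 x], ?_⟩
  -- Noetherian stabilization of the polynomial spans
  obtain ⟨r, hr⟩ := monotone_stabilizes_iff_noetherian.mpr
    (inferInstance : IsNoetherian (MvPolynomial (Fin N) ℝ) (Fin N → (MvPolynomial (Fin N) ℝ)))
    ⟨fun k => Submodule.span (MvPolynomial (Fin N) ℝ) (pFam fhat ghat k),
      fun k k' hkk' => Submodule.span_mono (pFam_mono fhat ghat hkk')⟩
  have hr' : ∀ k ≥ r, Submodule.span (MvPolynomial (Fin N) ℝ) (pFam fhat ghat k) = Submodule.span (MvPolynomial (Fin N) ℝ) (pFam fhat ghat r) :=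
    fun k hk => (hr k hk).symm
  have hspan_le : ∀ {S1 S2 : Set (Fin N → (MvPolynomial (Fin N) ℝ))},
      Submodule.span (MvPolynomial (Fin N) ℝ) S1 ≤ Submodule.span (MvPolynomial (Fin N) ℝ) S2 → ∀ z : Fin N → ℝ,
      Submodule.span ℝ ((fun p => pvfEval p z) '' S1)
        ≤ Submodule.span ℝ ((fun p => pvfEval p z) '' S2) := by
    intro S1 S2 hle z
    rw [Submodule.span_le]
    rintro _ ⟨p, hp, rfl⟩
    exact pvfEval_mem_span S2 z (hle (Submodule.subset_span hp))
  have key1 : ∀ k ≥ r, ∀ z, pSpan fhat ghat k z = pSpan fhat ghat r z := by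
    intro k hk z
    unfold pSpan
    exact le_antisymm (hspan_le (le_of_eq (hr' k hk)) z)
      (hspan_le (Submodule.span_mono (pFam_mono fhat ghat hk)) z)
  have key2 : ∀ z, pSpanInf fhat ghat z = pSpan fhat ghat r z := by
    intro z
    unfold pSpanInf pSpan
    apply le_antisymm
    · refine hspan_le ?_ z
      rw [Submodule.span_le]
      intro p hp
      obtain ⟨k, hk⟩ := Set.mem_iUnion.1 hp
      have h1 : p ∈ Submodule.span (MvPolynomial (Fin N) ℝ) (pFam fhat ghat (max k r)) :=
        Submodule.subset_span (pFam_mono fhat ghat (le_max_left k r) hk)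
      have h2 := hr' (max k r) (le_max_right k r)
      rw [h2] at h1
      exact h1
    · exact hspan_le (Submodule.span_mono (Set.subset_iUnion (pFam fhat ghat) r)) z
  refine ⟨r, fun k hk => ?_⟩
  ext x
  simp only [Set.mem_setOf_eq]
  have : Module.finrank ℝ (aSpan f g k x) = Module.finrank ℝ (aSpanInf f g x) := by
    rw [← part1 x k, key1 k hk (T x), ← key2 (T x), part2 x]
  rw [this]
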